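/- The free energy F is twice continuously differentiable on ℝ and the tension τ̂ = F' satisfies c₁ ≤ τ̂'(ρ) ≤ c₂ for all ρ ∈ ℝ; in particular the tension is strictly increasing, so the isothermal p-system ∂_t r = ∂_x p, ∂_t p = ∂_x τ̂(r) is strictly hyperbolic. -/

import Mathlib

open MeasureTheory Real

/-- The Gibbs function `G(τ) = log ∫ exp(τ r - V(r)) dr`. -/
noncomputable def gibbsG (V : ℝ → ℝ) (τ : ℝ) : ℝ :=
  Real.log (∫ r : ℝ, Real.exp (τ * r - V r))

/-- The free energy `F(ρ) = sup_τ (τ ρ - G(τ))`. -/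
noncomputable def freeF (V : ℝ → ℝ) (ρ : ℝ) : ℝ :=
  ⨆ τ : ℝ, (τ * ρ - gibbsG V τ)


namespace FE

noncomputable def Z0 (V : ℝ → ℝ) (τ : ℝ) : ℝ := ∫ r : ℝ, Real.exp (τ * r - V r)
noncomputable def Z1 (V : ℝ → ℝ) (τ : ℝ) : ℝ := ∫ r : ℝ, r * Real.exp (τ * r - V r)
noncomputable def Z2 (V : ℝ → ℝ) (τ : ℝ) : ℝ := ∫ r : ℝ, r ^ 2 * Real.exp (τ * r - V r)
noncomputable def mea (V : ℝ → ℝ) (τ : ℝ) : ℝ := Z1 V τ / Z0 V τ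
noncomputable def Gvar (V : ℝ → ℝ) (τ : ℝ) : ℝ := Z2 V τ / Z0 V τ - mea V τ ^ 2

open Filter Set

lemma abs_r_le (r : ℝ) : |r| ≤ 1 + r ^ 2 := by nlinarith [sq_nonneg (|r| - 1), sq_abs r]

lemma abs_sub_le' (a b : ℝ) : |a - b| ≤ |a| + |b| := by
  rw [sub_eq_add_neg]
  exact (abs_add_le a (-b)).trans (by rw [abs_neg])

variable {V : ℝ → ℝ} {c₁ c₂ : ℝ}

lemma hVd (hV : ContDiff ℝ 2 V) : Differentiable ℝ V := hV.differentiable (by norm_num)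

lemma hV1 (hV : ContDiff ℝ 2 V) : ContDiff ℝ 1 (deriv V) := by
  rw [show (2 : WithTop ℕ∞) = 1 + 1 from by norm_num, contDiff_succ_iff_deriv] at hV
  exact hV.2.2

lemma hV'd (hV : ContDiff ℝ 2 V) : Differentiable ℝ (deriv V) :=
  (hV1 hV).differentiable one_ne_zero

lemma contV'' (hV : ContDiff ℝ 2 V) : Continuous (deriv (deriv V)) :=
  (contDiff_one_iff_deriv.mp (hV1 hV)).2

/-- tangent line inequality for convex differentiable functions on univ -/
lemma tangent {g : ℝ → ℝ} (hg : ConvexOn ℝ univ g) (hgd : Differentiable ℝ g) (x y : ℝ) :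
    g x + deriv g x * (y - x) ≤ g y := by
  rcases lt_trichotomy x y with h | h | h
  · have := hg.deriv_le_slope (mem_univ x) (mem_univ y) h (hgd x)
    rw [slope_def_field] at this
    have hxy : 0 < y - x := by linarith
    rw [le_div_iff₀ hxy] at this
    nlinarith
  · subst h; simp
  · have := hg.slope_le_deriv (mem_univ y) (mem_univ x) h (hgd x)
    rw [slope_def_field] at this
    have hxy : 0 < x - y := by linarith
    rw [div_le_iff₀ hxy] at this
    nlinarith

lemma convex_shift (hV : ContDiff ℝ 2 V) {a : ℝ} (h : ∀ r, a ≤ deriv (deriv V) r) :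
    ConvexOn ℝ univ (fun r => V r - a / 2 * r ^ 2) := by
  have hd : Differentiable ℝ (fun r : ℝ => V r - a / 2 * r ^ 2) :=
    (hVd hV).sub (by fun_prop)
  have hderiv : deriv (fun r : ℝ => V r - a / 2 * r ^ 2) = fun r => deriv V r - a * r := by
    funext r
    rw [deriv_fun_sub ((hVd hV) r) (by fun_prop), deriv_const_mul _ (by fun_prop), deriv_pow_field]
    ring
  apply convexOn_univ_of_deriv2_nonneg hd
  · rw [hderiv]; exact (hV'd hV).sub (by fun_prop)
  · intro x
    have : deriv (deriv (fun r : ℝ => V r - a / 2 * r ^ 2)) x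
        = deriv (deriv V) x - a := by
      rw [hderiv, deriv_fun_sub ((hV'd hV) x) (by fun_prop), deriv_const_mul _ (by fun_prop)]
      simp
    simp only [Function.iterate_succ, Function.iterate_zero, Function.comp_apply, id_eq]
    rw [this]
    linarith [h x]


section
variable (hV : ContDiff ℝ 2 V) (hc₁ : 0 < c₁)
  (hlow : ∀ r : ℝ, c₁ ≤ deriv (deriv V) r) (hhigh : ∀ r : ℝ, deriv (deriv V) r ≤ c₂)

include hV hlow in
lemma quadLB : ∀ x y : ℝ, V x + deriv V x * (y - x) + c₁ / 2 * (y - x) ^ 2 ≤ V y := by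
  intro x y
  have hconv := convex_shift hV hlow
  have hgd : Differentiable ℝ (fun r : ℝ => V r - c₁ / 2 * r ^ 2) :=
    (hVd hV).sub (by fun_prop)
  have ht := tangent hconv hgd x y
  have hderiv : deriv (fun r : ℝ => V r - c₁ / 2 * r ^ 2) x = deriv V x - c₁ * x := by
    rw [deriv_fun_sub ((hVd hV) x) (by fun_prop), deriv_const_mul _ (by fun_prop), deriv_pow_field]
    ring
  rw [hderiv] at ht
  nlinarith [ht]

include hV hhigh in
lemma quadUB : ∀ x y : ℝ, V y ≤ V x + deriv V x * (y - x) + c₂ / 2 * (y - x) ^ 2 := by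
  intro x y
  have h2 : ∀ r, -c₂ ≤ deriv (deriv (fun s => -V s)) r := by
    intro r
    have : deriv (fun s => -V s) = fun s => -deriv V s := by
      funext s; rw [deriv.fun_neg]
    rw [this]
    have : deriv (fun s => -deriv V s) r = -(deriv (deriv V) r) := by rw [deriv.fun_neg]
    rw [this]
    linarith [hhigh r]
  have hVneg : ContDiff ℝ 2 (fun s => -V s) := hV.neg
  have hconv := convex_shift hVneg h2
  have hgd : Differentiable ℝ (fun r : ℝ => -V r - (-c₂) / 2 * r ^ 2) :=
    ((hVd hV).neg).sub (by fun_prop)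
  have ht := tangent hconv hgd x y
  have hderiv : deriv (fun r : ℝ => -V r - (-c₂) / 2 * r ^ 2) x = -deriv V x + c₂ * x := by
    rw [deriv_fun_sub (f := fun r => -V r) (((hVd hV).neg) x) (by fun_prop), deriv_const_mul _ (by fun_prop),
      deriv_pow_field, deriv.fun_neg]
    ring
  rw [hderiv] at ht
  nlinarith [ht]

include hV hlow in
lemma gradLB : ∀ x y : ℝ, c₁ * (y - x) ^ 2 ≤ (deriv V y - deriv V x) * (y - x) := by
  intro x y
  have h1 := quadLB hV hlow x y
  have h2 := quadLB hV hlow y x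
  nlinarith [h1, h2]

include hV hhigh in
lemma gradUB : ∀ x y : ℝ, (deriv V y - deriv V x) * (y - x) ≤ c₂ * (y - x) ^ 2 := by
  intro x y
  have h1 := quadUB hV hhigh x y
  have h2 := quadUB hV hhigh y x
  nlinarith [h1, h2]

include hV hc₁ hlow hhigh in
lemma gradAbs : ∀ x y : ℝ, |deriv V y - deriv V x| ≤ c₂ * |y - x| := by
  intro x y
  have h1 := gradLB hV hlow x y
  have h2 := gradUB hV hhigh x y
  rcases lt_trichotomy x y with h | h | h
  · rw [show |y - x| = y - x from abs_of_pos (by linarith), abs_le]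
    constructor <;> nlinarith
  · subst h; simp
  · rw [show |y - x| = -(y - x) from abs_of_neg (by linarith), abs_le]
    constructor <;> nlinarith

include hV hc₁ hlow in
lemma expBound : ∀ τ r : ℝ,
    exp (τ * r - V r) ≤ exp (-V 0 + (τ - deriv V 0) ^ 2 / c₁) * exp (-(c₁ / 4) * r ^ 2) := by
  intro τ r
  rw [← exp_add]
  apply exp_le_exp.mpr
  have hq := quadLB hV hlow 0 r
  simp only [sub_zero, mul_comm] at hq
  set a := τ - deriv V 0 with ha
  have key : a * r ≤ a ^ 2 / c₁ + c₁ / 4 * r ^ 2 := by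
    rw [← sub_nonneg]
    have : a ^ 2 / c₁ + c₁ / 4 * r ^ 2 - a * r = (a - c₁ / 2 * r) ^ 2 / c₁ := by
      field_simp; ring
    rw [this]; positivity
  nlinarith [hq, key]

include hV hc₁ hlow in
lemma integrable_dom (τ A B D : ℝ) (hA : 0 ≤ A) (hB : 0 ≤ B) (hD : 0 ≤ D) {f : ℝ → ℝ}
    (hf : Continuous f)
    (hbound : ∀ r, |f r| ≤ (A + B * r ^ 2 + D * r ^ 4) * exp (τ * r - V r)) :
    Integrable f := by
  set K := exp (-V 0 + (τ - deriv V 0) ^ 2 / c₁) with hK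
  have hc4 : (0:ℝ) < c₁ / 4 := by linarith
  have h0 : Integrable (fun r : ℝ => exp (-(c₁ / 4) * r ^ 2)) := integrable_exp_neg_mul_sq hc4
  have hpow : ∀ n : ℕ, Integrable (fun r : ℝ => r ^ n * exp (-(c₁ / 4) * r ^ 2)) := by
    intro n
    have h := integrable_rpow_mul_exp_neg_mul_sq hc4 (s := (n:ℝ))
      (by have : (0:ℝ) ≤ n := Nat.cast_nonneg n; linarith)
    have he : (fun x : ℝ => x ^ (n:ℝ) * exp (-(c₁ / 4) * x ^ 2))
        = fun x : ℝ => x ^ n * exp (-(c₁ / 4) * x ^ 2) := by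
      funext x; rw [Real.rpow_natCast]
    rwa [he] at h
  have h2 := hpow 2
  have h4 := hpow 4
  have hgauss : Integrable
      (fun r : ℝ => K * ((A + B * r ^ 2 + D * r ^ 4) * exp (-(c₁ / 4) * r ^ 2))) := by
    apply Integrable.const_mul
    apply (((h0.const_mul A).add (h2.const_mul B)).add (h4.const_mul D)).congr
    filter_upwards with r
    simp only [Pi.add_apply]
    ring
  apply hgauss.mono' hf.aestronglyMeasurable
  filter_upwards with r
  rw [Real.norm_eq_abs]
  calc |f r| ≤ (A + B * r ^ 2 + D * r ^ 4) * exp (τ * r - V r) := hbound r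
    _ ≤ (A + B * r ^ 2 + D * r ^ 4) * (K * exp (-(c₁ / 4) * r ^ 2)) := by
        apply mul_le_mul_of_nonneg_left (expBound hV hc₁ hlow τ r) (by positivity)
    _ = K * ((A + B * r ^ 2 + D * r ^ 4) * exp (-(c₁ / 4) * r ^ 2)) := by ring


include hV in
lemma contE : ∀ τ : ℝ, Continuous (fun r => exp (τ * r - V r)) := by
  intro τ
  exact Real.continuous_exp.comp ((continuous_const.mul continuous_id).sub (hVd hV).continuous)

include hV hc₁ hlow in
lemma hasDerivAt_mom {g : ℝ → ℝ} (hg : Continuous g) (A B : ℝ)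
    (hbound : ∀ r, |g r| ≤ A + B * r ^ 2) (τ₀ : ℝ) :
    Integrable (fun r : ℝ => r * g r * exp (τ₀ * r - V r)) ∧
    HasDerivAt (fun τ => ∫ r : ℝ, g r * exp (τ * r - V r))
      (∫ r : ℝ, r * g r * exp (τ₀ * r - V r)) τ₀ := by
  set A1 := |A| with hA1
  set B1 := |B| with hB1
  have hbound1 : ∀ r, |g r| ≤ A1 + B1 * r ^ 2 := by
    intro r
    calc |g r| ≤ A + B * r ^ 2 := hbound r
      _ ≤ A1 + B1 * r ^ 2 := by
          have := le_abs_self A; have := le_abs_self B; nlinarith [sq_nonneg r]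
  have hA1p : 0 ≤ A1 := abs_nonneg A
  have hB1p : 0 ≤ B1 := abs_nonneg B
  have hcontE := contE hV
  have habs := abs_r_le
  -- the uniform bound function
  set bnd : ℝ → ℝ := fun r =>
    |r| * (A1 + B1 * r ^ 2) * (exp ((τ₀ + 1) * r - V r) + exp ((τ₀ - 1) * r - V r)) with hbnd
  have int_bnd : Integrable bnd := by
    have key : ∀ s : ℝ, Integrable
        (fun r : ℝ => |r| * (A1 + B1 * r ^ 2) * exp (s * r - V r)) := by
      intro s
      apply integrable_dom hV hc₁ hlow s A1 (A1 + B1) B1 hA1p (by linarith) hB1p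
      · exact (continuous_abs.mul (by fun_prop)).mul (hcontE s)
      · intro r
        have h1 : |r| ≤ 1 + r ^ 2 := habs r
        have hexp : (0:ℝ) < exp (s * r - V r) := exp_pos _
        rw [abs_mul, abs_mul, abs_of_nonneg hexp.le, abs_abs,
          abs_of_nonneg (by positivity : (0:ℝ) ≤ A1 + B1 * r ^ 2)]
        have : |r| * (A1 + B1 * r ^ 2) ≤ A1 + (A1 + B1) * r ^ 2 + B1 * r ^ 4 := by
          nlinarith [mul_nonneg (sub_nonneg.mpr h1) (by positivity : (0:ℝ) ≤ A1 + B1 * r ^ 2)]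
        nlinarith [this, hexp]
    have := (key (τ₀ + 1)).add (key (τ₀ - 1))
    apply this.congr
    filter_upwards with r
    simp only [Pi.add_apply]
    ring
  have main := hasDerivAt_integral_of_dominated_loc_of_deriv_le (μ := volume)
    (F := fun τ (r : ℝ) => g r * exp (τ * r - V r))
    (F' := fun τ (r : ℝ) => r * g r * exp (τ * r - V r))
    (x₀ := τ₀) (bound := bnd) (Metric.ball_mem_nhds τ₀ one_pos)
    (Eventually.of_forall fun τ => (hg.mul (hcontE τ)).aestronglyMeasurable)
    (by
      apply integrable_dom hV hc₁ hlow τ₀ A1 B1 0 hA1p hB1p le_rfl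
      · exact hg.mul (hcontE τ₀)
      · intro r
        have hexp : (0:ℝ) < exp (τ₀ * r - V r) := exp_pos _
        rw [abs_mul, abs_of_nonneg hexp.le]
        nlinarith [hbound1 r, hexp])
    (((continuous_id.mul hg).mul (hcontE τ₀)).aestronglyMeasurable)
    (by
      filter_upwards with r τ hτ
      rw [Real.norm_eq_abs, abs_mul, abs_mul, abs_of_nonneg (exp_pos _).le]
      have hball : |τ - τ₀| < 1 := by
        rw [Metric.mem_ball, Real.dist_eq] at hτ; exact hτ
      have hexp : exp (τ * r - V r) ≤ exp ((τ₀ + 1) * r - V r) + exp ((τ₀ - 1) * r - V r) := by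
        rcases le_total 0 r with h | h
        · have : exp (τ * r - V r) ≤ exp ((τ₀ + 1) * r - V r) := by
            apply exp_le_exp.mpr
            have : (τ - τ₀) * r ≤ r := by nlinarith [abs_le.mp hball.le]
            linarith
          linarith [exp_pos ((τ₀ - 1) * r - V r)]
        · have : exp (τ * r - V r) ≤ exp ((τ₀ - 1) * r - V r) := by
            apply exp_le_exp.mpr
            have : (τ - τ₀) * r ≤ -r := by nlinarith [abs_le.mp hball.le]
            linarith
          linarith [exp_pos ((τ₀ + 1) * r - V r)]
      calc |r| * |g r| * exp (τ * r - V r)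
          ≤ |r| * (A1 + B1 * r ^ 2) * (exp ((τ₀ + 1) * r - V r) + exp ((τ₀ - 1) * r - V r)) := by
            apply mul_le_mul
            · exact mul_le_mul_of_nonneg_left (hbound1 r) (abs_nonneg r)
            · exact hexp
            · positivity
            · positivity
        _ = bnd r := rfl)
    int_bnd
    (by
      filter_upwards with r τ hτ
      have h1 : HasDerivAt (fun τ : ℝ => τ * r - V r) r τ := by
        simpa using (hasDerivAt_mul_const r).sub_const (V r)
      have h2 := (h1.exp).const_mul (g r)
      refine h2.congr_deriv ?_
      ring)
  exact ⟨main.1, main.2⟩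


include hV hc₁ hlow in
lemma intE (τ : ℝ) : Integrable (fun r : ℝ => Real.exp (τ * r - V r)) := by
  apply integrable_dom hV hc₁ hlow τ 1 0 0 zero_le_one le_rfl le_rfl (contE hV τ)
  intro r
  rw [abs_of_nonneg (exp_pos _).le]
  nlinarith [exp_pos (τ * r - V r)]

include hV hc₁ hlow in
lemma Z0pos (τ : ℝ) : 0 < Z0 V τ := integral_exp_pos (intE hV hc₁ hlow τ)

include hV hc₁ hlow in
lemma hZ0' (τ : ℝ) : HasDerivAt (Z0 V) (Z1 V τ) τ := by
  have h := (hasDerivAt_mom hV hc₁ hlow (g := fun _ => (1:ℝ)) continuous_const 1 0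
    (fun r => by norm_num) τ).2
  simp only [mul_one, one_mul] at h
  exact h

include hV hc₁ hlow in
lemma intRE (τ : ℝ) : Integrable (fun r : ℝ => r * Real.exp (τ * r - V r)) := by
  have h := (hasDerivAt_mom hV hc₁ hlow (g := fun _ => (1:ℝ)) continuous_const 1 0
    (fun r => by norm_num) τ).1
  simpa [mul_one] using h

include hV hc₁ hlow in
lemma hZ1' (τ : ℝ) : HasDerivAt (Z1 V) (Z2 V τ) τ := by
  have h := (hasDerivAt_mom hV hc₁ hlow (g := fun r => r) continuous_id 1 1
    (fun r => by simpa using abs_r_le r) τ).2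
  have he : (fun r : ℝ => r * r * Real.exp (τ * r - V r))
      = fun r : ℝ => r ^ 2 * Real.exp (τ * r - V r) := by funext r; ring
  rw [he] at h
  exact h

include hV hc₁ hlow in
lemma intR2E (τ : ℝ) : Integrable (fun r : ℝ => r ^ 2 * Real.exp (τ * r - V r)) := by
  have h := (hasDerivAt_mom hV hc₁ hlow (g := fun r => r) continuous_id 1 1
    (fun r => by simpa using abs_r_le r) τ).1
  have he : (fun r : ℝ => r * r * Real.exp (τ * r - V r))
      = fun r : ℝ => r ^ 2 * Real.exp (τ * r - V r) := by funext r; ring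
  rwa [he] at h

include hV hc₁ hlow in
lemma hZ2' (τ : ℝ) : HasDerivAt (Z2 V)
    (∫ r : ℝ, r * r ^ 2 * Real.exp (τ * r - V r)) τ :=
  (hasDerivAt_mom hV hc₁ hlow (g := fun r => r ^ 2) (by fun_prop) 0 1
    (fun r => by rw [abs_of_nonneg (sq_nonneg r)]; nlinarith) τ).2

include hV hc₁ hlow hhigh in
lemma hc₂pos : 0 < c₂ := lt_of_lt_of_le hc₁ ((hlow 0).trans (hhigh 0))

include hV hc₁ hlow hhigh in
lemma intQ (τ μm κ : ℝ) :
    Integrable (fun r : ℝ => (r - μm) * (deriv V r - κ) * Real.exp (τ * r - V r)) := by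
  have hc₂ : 0 < c₂ := hc₂pos hV hc₁ hlow hhigh
  set K := |κ| + |deriv V 0| with hK
  have hK0 : 0 ≤ K := by positivity
  have hτV : ∀ r : ℝ, |deriv V r - κ| ≤ K + c₂ * |r| := by
    intro r
    have h1 : deriv V r - κ = (deriv V r - deriv V 0) - (κ - deriv V 0) := by ring
    rw [h1]
    calc |(deriv V r - deriv V 0) - (κ - deriv V 0)|
        ≤ |deriv V r - deriv V 0| + |κ - deriv V 0| := abs_sub_le' _ _
      _ ≤ c₂ * |r| + (|κ| + |deriv V 0|) := by
          have := gradAbs hV hc₁ hlow hhigh 0 r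
          simp only [sub_zero] at this
          exact add_le_add this (abs_sub_le' _ _)
      _ = K + c₂ * |r| := by rw [hK]; ring
  apply integrable_dom hV hc₁ hlow τ (K * (1 + |μm|) + c₂ * |μm|)
      (K + c₂ * |μm| + c₂ * (1 + |μm|)) c₂ (by positivity) (by positivity) hc₂.le
  · exact ((continuous_id.sub continuous_const).mul
      (((hV'd hV).continuous).sub continuous_const)).mul (contE hV τ)
  · intro r
    have hexp : (0:ℝ) < Real.exp (τ * r - V r) := exp_pos _
    rw [abs_mul, abs_mul, abs_of_nonneg hexp.le]
    apply mul_le_mul_of_nonneg_right _ hexp.le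
    have h2 : |r - μm| ≤ |r| + |μm| := abs_sub_le' r μm
    have h3 := hτV r
    have habs := abs_r_le r
    have h4 : |r - μm| * |deriv V r - κ| ≤ (|r| + |μm|) * (K + c₂ * |r|) :=
      mul_le_mul h2 h3 (abs_nonneg _) (by positivity)
    have h5 : (|r| + |μm|) * (K + c₂ * |r|)
        ≤ K * (1 + |μm|) + c₂ * |μm| + (K + c₂ * |μm| + c₂ * (1 + |μm|)) * r ^ 2 + c₂ * r ^ 4 := by
      have hr2 : |r| * |r| = r ^ 2 := by rw [← abs_mul, abs_of_nonneg (mul_self_nonneg r)]; ring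
      have e1 : K * |r| ≤ K * (1 + r ^ 2) := mul_le_mul_of_nonneg_left habs hK0
      have e2 : (c₂ * |μm|) * |r| ≤ (c₂ * |μm|) * (1 + r ^ 2) :=
        mul_le_mul_of_nonneg_left habs (by positivity)
      have expand : (|r| + |μm|) * (K + c₂ * |r|)
          = K * |r| + c₂ * (|r| * |r|) + K * |μm| + (c₂ * |μm|) * |r| := by ring
      rw [expand, hr2]
      nlinarith [e1, e2, mul_nonneg hc₂.le (sq_nonneg (r ^ 2)),
        mul_nonneg (mul_nonneg hc₂.le (abs_nonneg μm)) (sq_nonneg r),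
        mul_nonneg hK0 (sq_nonneg r), sq_nonneg r, abs_nonneg μm]
    linarith [h4, h5]

include hV hc₁ hlow hhigh in
lemma ibp (τ μm : ℝ) :
    ∫ r : ℝ, (r - μm) * (deriv V r - τ) * Real.exp (τ * r - V r) = Z0 V τ := by
  have hc₂ : 0 < c₂ := hc₂pos hV hc₁ hlow hhigh
  set f : ℝ → ℝ := fun r => (r - μm) * Real.exp (τ * r - V r) with hf
  set f' : ℝ → ℝ := fun r =>
    Real.exp (τ * r - V r) - (r - μm) * (deriv V r - τ) * Real.exp (τ * r - V r) with hf'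
  have hder : ∀ r, HasDerivAt f (f' r) r := by
    intro r
    have h1 : HasDerivAt (fun r : ℝ => τ * r - V r) (τ - deriv V r) r := by
      exact (by simpa using ((hasDerivAt_id r).const_mul τ) : HasDerivAt (fun x : ℝ => τ * x) τ r).sub (hVd hV r).hasDerivAt
    have h2 := h1.exp
    have h3 := ((hasDerivAt_id r).sub_const μm).mul h2
    refine h3.congr_deriv ?_
    simp only [hf', id_eq]
    ring
  have hintf : Integrable f := by
    apply integrable_dom hV hc₁ hlow τ (1 + |μm|) 1 0 (by positivity) zero_le_one le_rfl
    · exact (continuous_id.sub continuous_const).mul (contE hV τ)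
    · intro r
      have hexp : (0:ℝ) < Real.exp (τ * r - V r) := exp_pos _
      rw [abs_mul, abs_of_nonneg hexp.le]
      apply mul_le_mul_of_nonneg_right _ hexp.le
      have := abs_sub_le' r μm
      have := abs_r_le r
      nlinarith
  have hintq := intQ hV hc₁ hlow hhigh τ μm τ
  have hintf' : Integrable f' := by
    apply ((intE hV hc₁ hlow τ).sub hintq).congr
    filter_upwards with r
    simp [hf']
  have key : ∫ r, f' r = 0 :=
    integral_eq_zero_of_hasDerivAt_of_integrable hder hintf' hintf
  have hsplit : ∫ r, f' r
      = Z0 V τ - ∫ r : ℝ, (r - μm) * (deriv V r - τ) * Real.exp (τ * r - V r) := by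
    rw [hf']
    rw [integral_sub (intE hV hc₁ hlow τ) hintq]
    rfl
  rw [hsplit] at key
  linarith

include hV hc₁ hlow hhigh in
lemma var_bounds (τ : ℝ) : 1 / c₂ ≤ Gvar V τ ∧ Gvar V τ ≤ 1 / c₁ := by
  have hc₂ : 0 < c₂ := hc₂pos hV hc₁ hlow hhigh
  have hZ0p := Z0pos hV hc₁ hlow τ
  set m := mea V τ with hm
  have hZ1m : Z1 V τ = m * Z0 V τ := by
    rw [hm, mea]; field_simp
  -- integrability facts
  have hintE := intE hV hc₁ hlow τ
  have hintRE := intRE hV hc₁ hlow τ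
  have hintR2E := intR2E hV hc₁ hlow τ
  have hintSq : Integrable (fun r : ℝ => (r - m) ^ 2 * Real.exp (τ * r - V r)) := by
    apply integrable_dom hV hc₁ hlow τ (2 * m ^ 2) 2 0 (by positivity) (by norm_num) le_rfl
    · exact ((continuous_id.sub continuous_const).pow 2).mul (contE hV τ)
    · intro r
      have hexp : (0:ℝ) < Real.exp (τ * r - V r) := exp_pos _
      rw [abs_mul, abs_of_nonneg hexp.le, abs_of_nonneg (sq_nonneg _)]
      apply mul_le_mul_of_nonneg_right _ hexp.le
      nlinarith [sq_nonneg (r + m)]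
  have hintCross := intQ hV hc₁ hlow hhigh τ m (deriv V m)
  have hintRmE : Integrable (fun r : ℝ => (r - m) * Real.exp (τ * r - V r)) := by
    apply (hintRE.sub (hintE.const_mul m)).congr
    filter_upwards with r
    simp only [Pi.sub_apply]
    ring
  -- mean zero
  have hmean : ∫ r : ℝ, (r - m) * Real.exp (τ * r - V r) = 0 := by
    have he : (fun r : ℝ => (r - m) * Real.exp (τ * r - V r))
        = fun r : ℝ => r * Real.exp (τ * r - V r) - m * Real.exp (τ * r - V r) := by
      funext r; ring
    rw [he, integral_sub hintRE (hintE.const_mul m), integral_const_mul]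
    show Z1 V τ - m * Z0 V τ = 0
    rw [hZ1m]; ring
  -- key identity for cross term
  have key2 : ∫ r : ℝ, (r - m) * (deriv V r - deriv V m) * Real.exp (τ * r - V r)
      = Z0 V τ := by
    have he : (fun r : ℝ => (r - m) * (deriv V r - deriv V m) * Real.exp (τ * r - V r))
        = fun r : ℝ => (r - m) * (deriv V r - τ) * Real.exp (τ * r - V r)
          - (deriv V m - τ) * ((r - m) * Real.exp (τ * r - V r)) := by
      funext r; ring
    rw [he, integral_sub (intQ hV hc₁ hlow hhigh τ m τ) (hintRmE.const_mul _),
      integral_const_mul, hmean, ibp hV hc₁ hlow hhigh τ m]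
    ring
  -- pointwise bounds
  set S := ∫ r : ℝ, (r - m) ^ 2 * Real.exp (τ * r - V r) with hS
  have hlo : c₁ * S ≤ Z0 V τ := by
    rw [← key2, hS, ← integral_const_mul]
    apply integral_mono (hintSq.const_mul c₁) hintCross
    intro r
    have hg := gradLB hV hlow m r
    have hexp : (0:ℝ) < Real.exp (τ * r - V r) := exp_pos _
    have := mul_le_mul_of_nonneg_right hg hexp.le
    simp only
    nlinarith [this]
  have hhi : Z0 V τ ≤ c₂ * S := by
    rw [← key2, hS, ← integral_const_mul]
    apply integral_mono hintCross (hintSq.const_mul c₂)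
    intro r
    have hg := gradUB hV hhigh m r
    have hexp : (0:ℝ) < Real.exp (τ * r - V r) := exp_pos _
    have := mul_le_mul_of_nonneg_right hg hexp.le
    simp only
    nlinarith [this]
  -- S = Gvar * Z0
  have hSval : S = Gvar V τ * Z0 V τ := by
    have he : (fun r : ℝ => (r - m) ^ 2 * Real.exp (τ * r - V r))
        = fun r : ℝ => r ^ 2 * Real.exp (τ * r - V r)
          - (2 * m) * (r * Real.exp (τ * r - V r)) + m ^ 2 * Real.exp (τ * r - V r) := by
      funext r; ring
    have h1 : Integrable (fun r : ℝ =>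
        r ^ 2 * Real.exp (τ * r - V r) - 2 * m * (r * Real.exp (τ * r - V r))) := by
      apply (hintR2E.sub (hintRE.const_mul (2 * m))).congr
      filter_upwards with r
      simp [Pi.sub_apply]
    rw [hS, he, integral_add h1 (hintE.const_mul (m ^ 2)),
      integral_sub hintR2E (hintRE.const_mul (2 * m)), integral_const_mul, integral_const_mul]
    show Z2 V τ - 2 * m * Z1 V τ + m ^ 2 * Z0 V τ = Gvar V τ * Z0 V τ
    rw [Gvar, hZ1m, ← hm]
    field_simp
    ring
  have hhi' : Z0 V τ ≤ c₂ * (Gvar V τ * Z0 V τ) := by rw [← hSval]; exact hhi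
  have hlo' : c₁ * (Gvar V τ * Z0 V τ) ≤ Z0 V τ := by rw [← hSval]; exact hlo
  constructor
  · rw [div_le_iff₀ hc₂]
    nlinarith [hhi', hZ0p]
  · rw [le_div_iff₀ hc₁]
    nlinarith [hlo', hZ0p]


include hV hc₁ hlow in
lemma hmea' (τ : ℝ) : HasDerivAt (mea V) (Gvar V τ) τ := by
  have h := (hZ1' hV hc₁ hlow τ).div (hZ0' hV hc₁ hlow τ) (Z0pos hV hc₁ hlow τ).ne'
  have : (Z2 V τ * Z0 V τ - Z1 V τ * Z1 V τ) / Z0 V τ ^ 2 = Gvar V τ := by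
    rw [Gvar, mea]
    field_simp [(Z0pos hV hc₁ hlow τ).ne']
  rw [this] at h
  exact h

include hV hc₁ hlow hhigh in
lemma Gvar_pos (τ : ℝ) : 0 < Gvar V τ := by
  have hc₂ := hc₂pos hV hc₁ hlow hhigh
  exact lt_of_lt_of_le (div_pos one_pos hc₂) (var_bounds hV hc₁ hlow hhigh τ).1

include hV hc₁ hlow hhigh in
lemma mea_strictMono : StrictMono (mea V) :=
  strictMono_of_deriv_pos fun τ => by
    rw [(hmea' hV hc₁ hlow τ).deriv]; exact Gvar_pos hV hc₁ hlow hhigh τ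

include hV hc₁ hlow in
lemma contGvar : Continuous (Gvar V) := by
  have dZ0 : Differentiable ℝ (Z0 V) := fun τ => (hZ0' hV hc₁ hlow τ).differentiableAt
  have dZ1 : Differentiable ℝ (Z1 V) := fun τ => (hZ1' hV hc₁ hlow τ).differentiableAt
  have dZ2 : Differentiable ℝ (Z2 V) := fun τ => (hZ2' hV hc₁ hlow τ).differentiableAt
  have cZ0 := dZ0.continuous
  have cZ1 := dZ1.continuous
  have cZ2 := dZ2.continuous
  have hne : ∀ τ, Z0 V τ ≠ 0 := fun τ => (Z0pos hV hc₁ hlow τ).ne'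
  unfold Gvar mea
  exact (cZ2.div cZ0 hne).sub (((cZ1.div cZ0 hne)).pow 2)

include hV hc₁ hlow hhigh in
lemma mea_surj : Function.Surjective (mea V) := by
  have hc₂ := hc₂pos hV hc₁ hlow hhigh
  have dmea : Differentiable ℝ (mea V) := fun τ => (hmea' hV hc₁ hlow τ).differentiableAt
  have contm : Continuous (mea V) := dmea.continuous
  have hdiff : Differentiable ℝ (fun τ => mea V τ - τ / c₂) := fun τ =>
    ((hmea' hV hc₁ hlow τ).sub ((hasDerivAt_id τ).div_const c₂)).differentiableAt
  have hmono : Monotone (fun τ => mea V τ - τ / c₂) := by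
    apply monotone_of_deriv_nonneg hdiff
    intro τ
    have h : HasDerivAt (fun τ : ℝ => mea V τ - τ / c₂) (Gvar V τ - 1 / c₂) τ :=
      (hmea' hV hc₁ hlow τ).sub ((hasDerivAt_id τ).div_const c₂)
    rw [h.deriv]
    have := (var_bounds hV hc₁ hlow hhigh τ).1
    linarith
  have hub : ∀ τ ≥ (0:ℝ), mea V 0 + τ / c₂ ≤ mea V τ := by
    intro τ hτ
    have := hmono hτ
    simp only [zero_div, sub_zero] at this
    linarith
  have hlb : ∀ τ ≤ (0:ℝ), mea V τ ≤ mea V 0 + τ / c₂ := by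
    intro τ hτ
    have := hmono hτ
    simp only [zero_div, sub_zero] at this
    linarith
  apply contm.surjective
  · have h1 : ∀ᶠ τ in atTop, mea V 0 + τ / c₂ ≤ mea V τ := by
      filter_upwards [eventually_ge_atTop (0:ℝ)] with τ hτ using hub τ hτ
    apply tendsto_atTop_mono' atTop h1
    exact tendsto_atTop_add_const_left atTop (mea V 0) (tendsto_id.atTop_div_const hc₂)
  · have h1 : ∀ᶠ τ in atBot, mea V τ ≤ mea V 0 + τ / c₂ := by
      filter_upwards [eventually_le_atBot (0:ℝ)] with τ hτ using hlb τ hτ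
    apply tendsto_atBot_mono' atBot h1
    exact tendsto_atBot_add_const_left atBot (mea V 0) (tendsto_id.atBot_div_const hc₂)

include hV hc₁ hlow in
lemma hG' (τ : ℝ) : HasDerivAt (gibbsG V) (mea V τ) τ := by
  have h := (hZ0' hV hc₁ hlow τ).log (Z0pos hV hc₁ hlow τ).ne'
  exact h

include hV hc₁ hlow hhigh in
lemma sup_eq (ρ t : ℝ) (ht : mea V t = ρ) :
    freeF V ρ = t * ρ - gibbsG V t := by
  have hφ : ∀ τ : ℝ, HasDerivAt (fun τ => τ * ρ - gibbsG V τ) (ρ - mea V τ) τ := fun τ =>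
    (hasDerivAt_mul_const ρ).sub (hG' hV hc₁ hlow τ)
  have hmono := mea_strictMono hV hc₁ hlow hhigh
  have hdφ : Differentiable ℝ (fun τ : ℝ => τ * ρ - gibbsG V τ) := fun τ =>
    (hφ τ).differentiableAt
  have hcont : Continuous (fun τ : ℝ => τ * ρ - gibbsG V τ) := hdφ.continuous
  have hb : ∀ τ, τ * ρ - gibbsG V τ ≤ t * ρ - gibbsG V t := by
    intro τ
    rcases le_total τ t with h | h
    · have hmOn : MonotoneOn (fun τ => τ * ρ - gibbsG V τ) (Iic t) := by
        apply monotoneOn_of_deriv_nonneg (convex_Iic t) hcont.continuousOn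
        · exact fun x _ => ((hφ x).differentiableAt).differentiableWithinAt
        · intro x hx
          rw [interior_Iic] at hx
          rw [(hφ x).deriv]
          have := hmono hx
          rw [ht] at this
          linarith
      exact hmOn h (self_mem_Iic) h
    · have hmOn : AntitoneOn (fun τ => τ * ρ - gibbsG V τ) (Ici t) := by
        apply antitoneOn_of_deriv_nonpos (convex_Ici t) hcont.continuousOn
        · exact fun x _ => ((hφ x).differentiableAt).differentiableWithinAt
        · intro x hx
          rw [interior_Ici] at hx
          rw [(hφ x).deriv]
          have := hmono hx
          rw [ht] at this
          linarith
      exact hmOn (self_mem_Ici) h h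
  apply le_antisymm
  · exact ciSup_le hb
  · exact le_ciSup ⟨t * ρ - gibbsG V t, by rintro y ⟨τ, rfl⟩; exact hb τ⟩ t


end
end FE

open FE

/-- the free energy `F` is twice continuously differentiable and the
tension `τ̂ = F'` satisfies `c₁ ≤ τ̂'(ρ) ≤ c₂`; in particular the tension is strictly
increasing (strict hyperbolicity of the isothermal p-system). -/
theorem freeF_C2_and_tension_deriv_bounds
    (V : ℝ → ℝ) (c₁ c₂ : ℝ) (hc₁ : 0 < c₁)
    (hV : ContDiff ℝ 2 V)
    (hlow : ∀ r : ℝ, c₁ ≤ deriv (deriv V) r)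
    (hhigh : ∀ r : ℝ, deriv (deriv V) r ≤ c₂) :
    ContDiff ℝ 2 (freeF V) ∧
    (∀ ρ : ℝ, c₁ ≤ deriv (deriv (freeF V)) ρ ∧ deriv (deriv (freeF V)) ρ ≤ c₂) ∧
    StrictMono (deriv (freeF V)) := by

  have hc₂ : 0 < c₂ := hc₂pos hV hc₁ hlow hhigh
  set E := StrictMono.orderIsoOfSurjective (mea V) (mea_strictMono hV hc₁ hlow hhigh)
    (mea_surj hV hc₁ hlow hhigh) with hE
  set th : ℝ → ℝ := fun ρ => E.symm ρ with hth
  have hinv : ∀ ρ, mea V (th ρ) = ρ := fun ρ => E.apply_symm_apply ρ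
  have contth : Continuous th := E.symm.continuous
  have hth' : ∀ ρ, HasDerivAt th (Gvar V (th ρ))⁻¹ ρ := fun ρ =>
    HasDerivAt.of_local_left_inverse contth.continuousAt
      (hmea' hV hc₁ hlow (th ρ))
      (Gvar_pos hV hc₁ hlow hhigh (th ρ)).ne'
      (Filter.Eventually.of_forall hinv)
  have hfe : freeF V = fun ρ => th ρ * ρ - gibbsG V (th ρ) :=
    funext fun ρ => sup_eq hV hc₁ hlow hhigh ρ (th ρ) (hinv ρ)
  have hF' : ∀ ρ, HasDerivAt (freeF V) (th ρ) ρ := by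
    intro ρ
    rw [hfe]
    have h1 : HasDerivAt (fun ρ => th ρ * ρ) ((Gvar V (th ρ))⁻¹ * ρ + th ρ * 1) ρ :=
      (hth' ρ).mul (hasDerivAt_id ρ)
    have h2 : HasDerivAt (fun ρ => gibbsG V (th ρ))
        (mea V (th ρ) * (Gvar V (th ρ))⁻¹) ρ := (hG' hV hc₁ hlow (th ρ)).comp ρ (hth' ρ)
    have h3 := h1.sub h2
    refine h3.congr_deriv ?_
    rw [hinv ρ]
    ring
  have hd1 : deriv (freeF V) = th := funext fun ρ => (hF' ρ).deriv
  have hdth : deriv th = fun ρ => (Gvar V (th ρ))⁻¹ := funext fun ρ => (hth' ρ).deriv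
  refine ⟨?_, ?_, ?_⟩
  · rw [show (2 : WithTop ℕ∞) = 1 + 1 from by norm_num, contDiff_succ_iff_deriv]
    refine ⟨fun ρ => (hF' ρ).differentiableAt, by simp, ?_⟩
    rw [hd1, contDiff_one_iff_deriv]
    refine ⟨fun ρ => (hth' ρ).differentiableAt, ?_⟩
    rw [hdth]
    exact ((contGvar hV hc₁ hlow).comp contth).inv₀
      fun ρ => (Gvar_pos hV hc₁ hlow hhigh (th ρ)).ne'
  · intro ρ
    have hd2 : deriv (deriv (freeF V)) ρ = (Gvar V (th ρ))⁻¹ := by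
      rw [hd1, hdth]
    have h1 := (var_bounds hV hc₁ hlow hhigh (th ρ)).1
    have h2 := (var_bounds hV hc₁ hlow hhigh (th ρ)).2
    have hp := Gvar_pos hV hc₁ hlow hhigh (th ρ)
    rw [hd2]
    constructor
    · rw [inv_eq_one_div, le_div_iff₀ hp]
      have := mul_le_mul_of_nonneg_left h2 hc₁.le
      rwa [mul_one_div, div_self hc₁.ne'] at this
    · rw [inv_eq_one_div, div_le_iff₀ hp]
      have := mul_le_mul_of_nonneg_left h1 hc₂.le
      rwa [mul_one_div, div_self hc₂.ne'] at this
  · rw [hd1]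
    exact E.symm.strictMono
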